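/- Let ψ = C₁ ∧ ... ∧ Cₙ be a propositional CNF formula over variables x₁,...,xₘ. Define the Kripke model M = (W,R,π) with W = {c₁,...,cₙ, s₁,...,sₘ, s̄₁,...,s̄ₘ}, edges (cᵢ,sⱼ) ∈ R iff xⱼ occurs positively in Cᵢ, (cᵢ,s̄ⱼ) ∈ R iff xⱼ occurs negatively in Cᵢ, and labeling π with pⱼ, q ∈ π(sⱼ) and pⱼ ∈ π(s̄ⱼ) (and nothing else). Then ψ is satisfiable if and only if M, {c₁,...,cₙ} ⊨ ◇ dep(p₁,...,pₘ,q). -/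
import Mathlib


/-- A Kripke model over a set of worlds `W`: accessibility relation `R` and
valuation `val` assigning to each propositional variable the set of worlds where it holds. -/
structure KripkeModel (W : Type) where
  R : W → W → Prop
  val : ℕ → Set W

/-- `img R T = R[T]`, the set of all successors of the team `T`. -/
def img {W : Type} (R : W → W → Prop) (T : Set W) : Set W := {s | ∃ s' ∈ T, R s' s}

/-- `succTeams R T = ⟨T⟩`, the set of successor teams of `T`. -/
def succTeams {W : Type} (R : W → W → Prop) (T : Set W) : Set (Set W) :=
  {T' | T' ⊆ img R T ∧ ∀ s ∈ T, ∃ s' ∈ T', R s s'}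

/-- Formulas of modal dependence logic with classical Boolean connectives,
including an arbitrary `n`-ary classical connective `conn`. -/
inductive MDLForm : Type where
  | var : ℕ → MDLForm
  | nvar : ℕ → MDLForm
  | dep : List ℕ → ℕ → MDLForm
  | neg : MDLForm → MDLForm
  | and : MDLForm → MDLForm → MDLForm
  | or : MDLForm → MDLForm → MDLForm
  | xor : MDLForm → MDLForm → MDLForm
  | conn : (n : ℕ) → ((Fin n → Bool) → Bool) → (Fin n → MDLForm) → MDLForm
  | box : MDLForm → MDLForm
  | dia : MDLForm → MDLForm

open Classical in
/-- Team semantics of modal dependence logic. -/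
noncomputable def sat {W : Type} (M : KripkeModel W) : Set W → MDLForm → Prop
  | T, .var p => ∀ w ∈ T, w ∈ M.val p
  | T, .nvar p => ∀ w ∈ T, w ∉ M.val p
  | T, .dep ps q => ∀ w ∈ T, ∀ w' ∈ T,
      (∀ p ∈ ps, (w ∈ M.val p ↔ w' ∈ M.val p)) → (w ∈ M.val q ↔ w' ∈ M.val q)
  | T, .neg φ => ¬ sat M T φ
  | T, .and φ ψ => sat M T φ ∧ sat M T ψ
  | T, .or φ ψ => sat M T φ ∨ sat M T ψ
  | T, .xor φ ψ => Xor' (sat M T φ) (sat M T ψ)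
  | T, .conn _ f φs => f (fun i => decide (sat M T (φs i))) = true
  | T, .box φ => sat M (img M.R T) φ
  | T, .dia φ => ∃ T' ∈ succTeams M.R T, sat M T' φ

/-- A formula is downwards closed if satisfaction is preserved under subteams. -/
def DownClosed (φ : MDLForm) : Prop :=
  ∀ (W : Type) (M : KripkeModel W) (T T' : Set W), T' ⊆ T → sat M T φ → sat M T' φ

/-- Reduction from CNF satisfiability: a CNF `ψ` with `n` nonempty clauses over `m`
variables (a clause is a list of literals `(j, b)`, meaning `xⱼ` if `b` and `¬xⱼ`
otherwise) is satisfiable iff `◇dep(p₁,…,pₘ,q)` holds on the team of clause-worlds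
in the associated Kripke model. -/
theorem cnf_sat_iff_dia_dep (n m : ℕ) (ψ : Fin n → List (Fin m × Bool))
    (hne : ∀ i, ψ i ≠ []) :
    (∃ α : Fin m → Bool, ∀ i, ∃ l ∈ ψ i, α l.1 = l.2) ↔
      sat
        { R := fun u v =>
            match u, v with
            | Sum.inl i, Sum.inr l => l ∈ ψ i
            | _, _ => False,
          val := fun k => {w | match w with
            | Sum.inl _ => False
            | Sum.inr (j, b) => k = (j : ℕ) + 1 ∨ (k = 0 ∧ b = true)}
          : KripkeModel (Fin n ⊕ (Fin m × Bool)) }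
        (Set.range Sum.inl)
        (.dia (.dep ((List.range m).map (· + 1)) 0)) := by
  classical
  constructor
  · rintro ⟨α, hα⟩
    rw [sat]
    refine ⟨{w | ∃ l : Fin m × Bool, w = Sum.inr l ∧ α l.1 = l.2 ∧ ∃ i, l ∈ ψ i},
      ⟨?_, ?_⟩, ?_⟩
    · rintro w ⟨l, rfl, hb, i, hi⟩
      exact ⟨Sum.inl i, ⟨i, rfl⟩, hi⟩
    · rintro w ⟨i, rfl⟩
      obtain ⟨l, hl, hb⟩ := hα i
      exact ⟨Sum.inr l, ⟨l, rfl, hb, i, hl⟩, hl⟩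
    · rw [sat]
      rintro w ⟨⟨j, b⟩, rfl, hb, -⟩ w' ⟨⟨j', b'⟩, rfl, hb', -⟩ hp
      have hj : (j : ℕ) = (j' : ℕ) := by
        have h1 := hp ((j : ℕ) + 1) (by
          simp only [List.mem_map, List.mem_range]
          exact ⟨j, j.isLt, rfl⟩)
        have h2 : Sum.inr (j, b) ∈ ({w | match w with
            | Sum.inl _ => False
            | Sum.inr (j, b) => ((j : ℕ) + 1) = (j : ℕ) + 1 ∨ (((j : ℕ) + 1) = 0 ∧ b = true)} :
            Set (Fin n ⊕ (Fin m × Bool))) := Or.inl rfl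
        have h3 := h1.mp h2
        rcases h3 with h3 | h3
        · omega
        · omega
      have hjj : j = j' := Fin.ext hj
      subst hjj
      have hbb : b = b' := hb.symm.trans hb'
      subst hbb
      exact Iff.rfl
  · rw [sat]
    rintro ⟨T', ⟨hsub, hsucc⟩, hdep⟩
    rw [sat] at hdep
    refine ⟨fun j => decide (Sum.inr (j, true) ∈ T'), fun i => ?_⟩
    obtain ⟨w, hw, hR⟩ := hsucc (Sum.inl i) ⟨i, rfl⟩
    match w, hR with
    | Sum.inr l, hR =>
      refine ⟨l, hR, ?_⟩
      obtain ⟨j, b⟩ := l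
      cases b with
      | true => simpa using hw
      | false =>
        simp only [decide_eq_false_iff_not]
        intro hT
        have hagree : ∀ p ∈ (List.range m).map (· + 1),
            (Sum.inr (j, true) ∈ ({w | match w with
              | Sum.inl _ => False
              | Sum.inr (j, b) => p = (j : ℕ) + 1 ∨ (p = 0 ∧ b = true)} :
              Set (Fin n ⊕ (Fin m × Bool))) ↔
             Sum.inr (j, false) ∈ ({w | match w with
              | Sum.inl _ => False
              | Sum.inr (j, b) => p = (j : ℕ) + 1 ∨ (p = 0 ∧ b = true)} :
              Set (Fin n ⊕ (Fin m × Bool)))) := by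
          intro p hp
          simp only [List.mem_map, List.mem_range] at hp
          obtain ⟨k, hk, rfl⟩ := hp
          constructor
          · rintro (h | h)
            · exact Or.inl h
            · omega
          · rintro (h | h)
            · exact Or.inl h
            · omega
        have := (hdep (Sum.inr (j, true)) hT (Sum.inr (j, false)) hw hagree).mp
          (Or.inr ⟨rfl, rfl⟩)
        rcases this with h | h
        · omega
        · exact absurd h.2 (by simp)
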